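/- Let M be an n×n quaternionic matrix and h a nonzero quaternion such that every entry of N := (h⁻¹·I_n)·M·(h·I_n) (i.e. entrywise conjugation x ↦ h⁻¹·x·h) lies in the complex subfield ℂ of ℍ. Regarding N as a complex n×n matrix, for every λ ∈ ℂ one has det(λ·I_{2n} − ψ(M)) = det(λ·I_n − N) · det(λ·I_n − conj(N)), where conj(N) is the entrywise complex conjugate of N. -/

import Mathlib

noncomputable section

/-- Simplex part of a quaternion: `q = Sc q + j * Pc q`. -/
def Sc (q : Quaternion ℝ) : ℂ := ⟨q.re, q.imI⟩

/-- Perplex part of a quaternion: `q = Sc q + j * Pc q`. -/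
def Pc (q : Quaternion ℝ) : ℂ := ⟨q.imJ, -q.imK⟩

/-- The map ψ sending a quaternionic matrix `M = M^S + j·M^P` (symplectic decomposition)
to the complex block matrix `[[M^S, -conj(M^P)], [M^P, conj(M^S)]]`. -/
def psi {I J : Type*} (M : Matrix I J (Quaternion ℝ)) :
    Matrix (I ⊕ I) (J ⊕ J) ℂ :=
  Matrix.fromBlocks (M.map Sc) (-((M.map Pc).map (starRingEnd ℂ)))
    (M.map Pc) ((M.map Sc).map (starRingEnd ℂ))

lemma Sc_mul (a b : Quaternion ℝ) :
    Sc (a * b) = Sc a * Sc b - (starRingEnd ℂ) (Pc a) * Pc b := by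
  apply Complex.ext <;>
    simp [Sc, Pc, Complex.ext_iff, Quaternion.re_mul, Quaternion.imI_mul,
      Complex.mul_re, Complex.mul_im] <;> ring

lemma Pc_mul (a b : Quaternion ℝ) :
    Pc (a * b) = (starRingEnd ℂ) (Sc a) * Pc b + Pc a * Sc b := by
  apply Complex.ext <;>
    simp [Sc, Pc, Complex.ext_iff, Quaternion.imJ_mul, Quaternion.imK_mul,
      Complex.mul_re, Complex.mul_im] <;> ring

/-- `Sc` as an additive monoid hom. -/
def ScHom : Quaternion ℝ →+ ℂ where
  toFun := Sc
  map_zero' := by simp [Sc]; rfl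
  map_add' a b := by apply Complex.ext <;> simp [Sc]

/-- `Pc` as an additive monoid hom. -/
def PcHom : Quaternion ℝ →+ ℂ where
  toFun := Pc
  map_zero' := by simp [Pc, Quaternion.imJ_zero, Quaternion.imK_zero]; rfl
  map_add' a b := by apply Complex.ext <;> simp [Pc]; ring

lemma Sc_sum {ι : Type*} (s : Finset ι) (f : ι → Quaternion ℝ) :
    Sc (∑ x ∈ s, f x) = ∑ x ∈ s, Sc (f x) := map_sum ScHom f s

lemma Pc_sum {ι : Type*} (s : Finset ι) (f : ι → Quaternion ℝ) :
    Pc (∑ x ∈ s, f x) = ∑ x ∈ s, Pc (f x) := map_sum PcHom f s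

lemma psi_mul {n : Type*} [Fintype n] [DecidableEq n]
    (A B : Matrix n n (Quaternion ℝ)) : psi (A * B) = psi A * psi B := by
  ext i j
  rcases i with i | i <;> rcases j with j | j <;>
    simp [psi, Matrix.mul_apply, Fintype.sum_sum_type, Sc_sum, Pc_sum, Sc_mul, Pc_mul,
      map_sum, map_add, map_mul, map_sub, Finset.sum_add_distrib, Finset.sum_sub_distrib,
      sub_eq_add_neg, neg_add, mul_comm] <;> abel

lemma psi_one {n : Type*} [Fintype n] [DecidableEq n] :
    psi (1 : Matrix n n (Quaternion ℝ)) = 1 := by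
  ext i j
  rcases i with i | i <;> rcases j with j | j <;>
    simp [psi, Matrix.one_apply, Sc, Pc, apply_ite, Complex.ext_iff, Quaternion.re_one,
      Quaternion.imI_one, Quaternion.imJ_one, Quaternion.imK_one, Quaternion.re_zero,
      Quaternion.imI_zero, Quaternion.imJ_zero, Quaternion.imK_zero] <;>
    split_ifs <;> simp [Quaternion.re_one, Quaternion.imI_one, Quaternion.imJ_one,
      Quaternion.imK_one, Quaternion.re_zero, Quaternion.imI_zero, Quaternion.imJ_zero,
      Quaternion.imK_zero]

/-- let M be an n×n quaternionic matrix and h a nonzero quaternion such that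
every entry of N := h⁻¹·M·h (entrywise conjugation) lies in the complex subfield ℂ ⊆ ℍ
(its j and k components vanish). Regarding N as the complex matrix with entries
Sc(h⁻¹·M_{rs}·h), for every λ ∈ ℂ one has
det(λI_{2n} − ψ(M)) = det(λI_n − N)·det(λI_n − conj(N)). -/
theorem psi_charpoly_of_complex_conjugated (n : ℕ)
    (M : Matrix (Fin n) (Fin n) (Quaternion ℝ)) (h : Quaternion ℝ) (hh : h ≠ 0)
    (hcplx : ∀ r s : Fin n,
      (h⁻¹ * M r s * h).imJ = 0 ∧ (h⁻¹ * M r s * h).imK = 0)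
    (N : Matrix (Fin n) (Fin n) ℂ) (hN : ∀ r s : Fin n, N r s = Sc (h⁻¹ * M r s * h)) :
    ∀ lam : ℂ,
      (lam • (1 : Matrix (Fin n ⊕ Fin n) (Fin n ⊕ Fin n) ℂ) - psi M).det =
        (lam • (1 : Matrix (Fin n) (Fin n) ℂ) - N).det *
          (lam • (1 : Matrix (Fin n) (Fin n) ℂ) - N.map (starRingEnd ℂ)).det := by
  intro lam
  set D : Matrix (Fin n) (Fin n) (Quaternion ℝ) := Matrix.diagonal fun _ => h with hD
  set Di : Matrix (Fin n) (Fin n) (Quaternion ℝ) := Matrix.diagonal fun _ => h⁻¹ with hDi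
  have hDDi : D * Di = 1 := by
    rw [hD, hDi, Matrix.diagonal_mul_diagonal]
    simp [mul_inv_cancel₀ hh]
  have hDiD : Di * D = 1 := by
    rw [hD, hDi, Matrix.diagonal_mul_diagonal]
    simp [inv_mul_cancel₀ hh]
  set N' : Matrix (Fin n) (Fin n) (Quaternion ℝ) := Di * M * D with hN'
  have hM : M = D * N' * Di := by
    rw [hN']
    rw [show D * (Di * M * D) * Di = (D * Di) * M * (D * Di) by
      simp [Matrix.mul_assoc]]
    simp [hDDi]
  have hN'e : ∀ r s, N' r s = h⁻¹ * M r s * h := by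
    intro r s
    simp [hN', hD, hDi, Matrix.mul_apply, Matrix.diagonal_apply, Finset.sum_ite_eq,
      Finset.sum_ite_eq', mul_assoc]
  have hpsiN' : psi N' = Matrix.fromBlocks N 0 0 (N.map (starRingEnd ℂ)) := by
    have hPc : N'.map Pc = 0 := by
      ext r s
      have := hcplx r s
      simp [Pc, hN'e, this.1, this.2, Complex.ext_iff]
    have hScN : N'.map Sc = N := by
      ext r s
      simp [hN'e, hN]
    rw [psi, hPc, hScN]
    simp
  have key : lam • (1 : Matrix (Fin n ⊕ Fin n) (Fin n ⊕ Fin n) ℂ) - psi M =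
      psi D * (lam • 1 - psi N') * psi Di := by
    have h1 : psi D * psi Di = 1 := by rw [← psi_mul, hDDi, psi_one]
    rw [hM, psi_mul, psi_mul]
    rw [Matrix.mul_sub, Matrix.sub_mul]
    congr 1
    · rw [Matrix.mul_smul, Matrix.mul_one, Matrix.smul_mul, h1]
  rw [key, Matrix.det_mul, Matrix.det_mul, mul_comm, ← mul_assoc, ← Matrix.det_mul,
    show psi Di * psi D = 1 by rw [← psi_mul, hDiD, psi_one], Matrix.det_one, one_mul]
  rw [hpsiN']
  rw [show (lam • (1 : Matrix (Fin n ⊕ Fin n) (Fin n ⊕ Fin n) ℂ)) =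
      Matrix.fromBlocks (lam • 1) 0 0 (lam • 1) by
    rw [← Matrix.fromBlocks_one, Matrix.fromBlocks_smul]; simp]
  rw [sub_eq_add_neg, Matrix.fromBlocks_neg, Matrix.fromBlocks_add]
  simp only [neg_zero, add_zero, zero_add]
  rw [Matrix.det_fromBlocks_zero₂₁]
  simp [sub_eq_add_neg]
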